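/- Inf-sup stability of the augmented first-kind formulation: for every nonzero φ ∈ H there exists a nonzero pair (ψ₁, ψ₂) ∈ H × H such that |⟨A_I φ, ψ₁⟩ + ⟨Pi⁺ φ, ψ₂⟩| ≥ (1 / (√2 · max{‖Sio‖, 1})) · ‖φ‖ · √(‖ψ₁‖² + ‖ψ₂‖²). -/

import Mathlib

open scoped InnerProductSpace

/-- Inf-sup stability of the augmented first-kind formulation: for every
nonzero `φ` there is a nonzero pair `(ψ₁, ψ₂)` with
`|⟨A_I φ, ψ₁⟩ + ⟨Pi⁺ φ, ψ₂⟩| ≥ (1/(√2·max{‖Sio‖,1}))·‖φ‖·√(‖ψ₁‖² + ‖ψ₂‖²)`. -/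
theorem augmented_first_kind_inf_sup
    {H : Type*} [NormedAddCommGroup H] [InnerProductSpace ℂ H] [CompleteSpace H]
    (Pi Po Sio Soi : H →L[ℂ] H)
    (hPi : Pi ∘L Pi = Pi) (hPo : Po ∘L Po = Po)
    (hSio : ∀ φ f : H, φ = Sio f ↔ (Pi φ = φ ∧ Po (φ - f) = 0))
    (hSoi : ∀ φ f : H, φ = Soi f ↔ (Po φ = φ ∧ Pi (φ - f) = 0)) :
    ∀ φ : H, φ ≠ 0 → ∃ ψ₁ ψ₂ : H, ¬(ψ₁ = 0 ∧ ψ₂ = 0) ∧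
      ‖⟪(Pi - (1 - Po)) φ, ψ₁⟫_ℂ + ⟪(1 - Pi) φ, ψ₂⟫_ℂ‖ ≥
        (1 / (Real.sqrt 2 * max ‖Sio‖ 1)) * ‖φ‖ * Real.sqrt (‖ψ₁‖ ^ 2 + ‖ψ₂‖ ^ 2) := by
  intro φ hφ
  set a : H := (Pi - (1 - Po)) φ with ha
  set b : H := ((1 : H →L[ℂ] H) - Pi) φ with hb
  have haφ : a = Pi φ - (φ - Po φ) := by
    simp [ha, ContinuousLinearMap.sub_apply, ContinuousLinearMap.one_apply]
  have hbφ : b = φ - Pi φ := by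
    simp [hb, ContinuousLinearMap.sub_apply, ContinuousLinearMap.one_apply]
  have hPiPi : Pi (Pi φ) = Pi φ := by
    have := congrArg (fun T : H →L[ℂ] H => T φ) hPi
    simpa using this
  have hPoPo : Po (Po φ) = Po φ := by
    have := congrArg (fun T : H →L[ℂ] H => T φ) hPo
    simpa using this
  -- Key: Pi φ = Sio a
  have hkey : Pi φ = Sio a := by
    rw [hSio]
    refine ⟨hPiPi, ?_⟩
    have : Pi φ - a = φ - Po φ := by rw [haφ]; abel
    rw [this, map_sub, hPoPo, sub_self]
  have hPinorm : ‖Pi φ‖ ≤ ‖Sio‖ * ‖a‖ := by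
    rw [hkey]; exact Sio.le_opNorm a
  have hφle : ‖φ‖ ≤ ‖Sio‖ * ‖a‖ + ‖b‖ := by
    have hφeq : φ = Pi φ + b := by rw [hbφ]; abel
    calc ‖φ‖ = ‖Pi φ + b‖ := by rw [← hφeq]
      _ ≤ ‖Pi φ‖ + ‖b‖ := norm_add_le _ _
      _ ≤ ‖Sio‖ * ‖a‖ + ‖b‖ := by linarith
  set M : ℝ := max ‖Sio‖ 1 with hM
  have hM1 : (1 : ℝ) ≤ M := le_max_right _ _
  have hMS : ‖Sio‖ ≤ M := le_max_left _ _
  have hM0 : 0 < M := lt_of_lt_of_le one_pos hM1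
  set s : ℝ := Real.sqrt (‖a‖ ^ 2 + ‖b‖ ^ 2) with hs
  have hsnn : 0 ≤ s := Real.sqrt_nonneg _
  have hs2 : s ^ 2 = ‖a‖ ^ 2 + ‖b‖ ^ 2 := Real.sq_sqrt (by positivity)
  have h2 : (0:ℝ) < Real.sqrt 2 := Real.sqrt_pos.mpr (by norm_num)
  have hab : ‖a‖ + ‖b‖ ≤ Real.sqrt 2 * s := by
    have h1 : ‖a‖ + ‖b‖ = Real.sqrt ((‖a‖ + ‖b‖) ^ 2) := by
      rw [Real.sqrt_sq (by positivity)]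
    have h2' : Real.sqrt 2 * s = Real.sqrt (2 * (‖a‖ ^ 2 + ‖b‖ ^ 2)) := by
      rw [hs, ← Real.sqrt_mul (by norm_num)]
    rw [h1, h2']
    apply Real.sqrt_le_sqrt
    nlinarith [sq_nonneg (‖a‖ - ‖b‖)]
  have hmain : ‖φ‖ ≤ M * (Real.sqrt 2 * s) := by
    have h3 : ‖Sio‖ * ‖a‖ + ‖b‖ ≤ M * (‖a‖ + ‖b‖) := by
      nlinarith [norm_nonneg a, norm_nonneg b]
    have h4 : M * (‖a‖ + ‖b‖) ≤ M * (Real.sqrt 2 * s) :=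
      mul_le_mul_of_nonneg_left hab (le_of_lt hM0)
    linarith
  have hsne : s ≠ 0 := by
    intro h0
    apply hφ
    have : ‖φ‖ ≤ 0 := by rw [h0] at hmain; simpa using hmain
    exact norm_le_zero_iff.mp this
  refine ⟨a, b, ?_, ?_⟩
  · rintro ⟨ha0, hb0⟩
    apply hsne
    rw [hs, ha0, hb0]
    simp
  · have hinner : ⟪a, a⟫_ℂ + ⟪b, b⟫_ℂ = ((‖a‖ ^ 2 + ‖b‖ ^ 2 : ℝ) : ℂ) := by
      rw [inner_self_eq_norm_sq_to_K, inner_self_eq_norm_sq_to_K]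
      norm_cast
    rw [hinner]
    have hnormeq : ‖((‖a‖ ^ 2 + ‖b‖ ^ 2 : ℝ) : ℂ)‖ = ‖a‖ ^ 2 + ‖b‖ ^ 2 := by
      rw [Complex.norm_of_nonneg (by positivity)]
    rw [hnormeq, ge_iff_le, show (1:ℝ) / (Real.sqrt 2 * M) * ‖φ‖ * s
        = (‖φ‖ * s) / (Real.sqrt 2 * M) by ring,
      div_le_iff₀ (by positivity)]
    calc ‖φ‖ * s ≤ (M * (Real.sqrt 2 * s)) * s :=
          mul_le_mul_of_nonneg_right hmain hsnn
      _ = (s ^ 2) * (Real.sqrt 2 * M) := by ring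
      _ = (‖a‖ ^ 2 + ‖b‖ ^ 2) * (Real.sqrt 2 * M) := by rw [hs2]
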